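/- Let K be a field and q ∈ K an element that is not a root of unity. In the quantum plane B = B(q), let I = B(ab−1)(a−1). Then the cyclic left B-module M = B/I is not Artinian. -/

import Mathlib

noncomputable section

open FreeAlgebra

/-- Defining relation of the quantum plane `B(q)`: `a * b = q • (b * a)`, where
`ι K 0` plays the role of `a` and `ι K 1` plays the role of `b`. -/
inductive QuantumPlaneRel (K : Type) [Field K] (q : K) :
    FreeAlgebra K (Fin 2) → FreeAlgebra K (Fin 2) → Prop
  | rel : QuantumPlaneRel K q (ι K (0 : Fin 2) * ι K (1 : Fin 2))
      (q • (ι K (1 : Fin 2) * ι K (0 : Fin 2)))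

/-- The coordinate algebra of the quantum plane `B(q)`. -/
abbrev QuantumPlane (K : Type) [Field K] (q : K) : Type :=
  RingQuot (QuantumPlaneRel K q)

/-- The generator `a` of the quantum plane. -/
def QuantumPlane.a (K : Type) [Field K] (q : K) : QuantumPlane K q :=
  RingQuot.mkAlgHom K (QuantumPlaneRel K q) (ι K (0 : Fin 2))

/-- The generator `b` of the quantum plane. -/
def QuantumPlane.b (K : Type) [Field K] (q : K) : QuantumPlane K q :=
  RingQuot.mkAlgHom K (QuantumPlaneRel K q) (ι K (1 : Fin 2))

namespace QPaux

variable (K : Type) [Field K] (q : K)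

/-- `a` acts by scaling `e_n` by `q ^ n`. -/
def opA : (ℕ →₀ K) →ₗ[K] (ℕ →₀ K) :=
  Finsupp.lsum ℕ (fun n => q ^ n • Finsupp.lsingle n)

/-- `b` acts by shifting `e_n ↦ e_{n+1}`. -/
def opB : (ℕ →₀ K) →ₗ[K] (ℕ →₀ K) :=
  Finsupp.lmapDomain K K (· + 1)

@[simp] lemma opA_single (n : ℕ) (c : K) :
    opA K q (Finsupp.single n c) = q ^ n • Finsupp.single n c := by
  simp [opA]

@[simp] lemma opB_single (n : ℕ) (c : K) :
    opB K (Finsupp.single n c) = Finsupp.single (n + 1) c := by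
  simp [opB, Finsupp.mapDomain_single]

lemma opA_apply (f : ℕ →₀ K) (n : ℕ) : opA K q f n = q ^ n * f n := by
  induction f using Finsupp.induction_linear with
  | zero => simp
  | add f g hf hg => simp [hf, hg, mul_add]
  | single m c =>
      rcases eq_or_ne m n with rfl | h
      · simp [Finsupp.smul_single]
      · simp [Finsupp.single_apply, h, Finsupp.smul_single]

lemma opB_apply_zero (f : ℕ →₀ K) : opB K f 0 = 0 := by
  induction f using Finsupp.induction_linear with
  | zero => simp
  | add f g hf hg => simp [hf, hg]
  | single m c => simp [Finsupp.single_apply]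

lemma opB_apply_succ (f : ℕ →₀ K) (n : ℕ) : opB K f (n + 1) = f n := by
  induction f using Finsupp.induction_linear with
  | zero => simp
  | add f g hf hg => simp [hf, hg]
  | single m c => simp [Finsupp.single_apply]

/-- The representation of the free algebra on `ℕ →₀ K`. -/
def φ : FreeAlgebra K (Fin 2) →ₐ[K] Module.End K (ℕ →₀ K) :=
  FreeAlgebra.lift K (fun i => if i = 0 then opA K q else opB K)

@[simp] lemma φ_ι_zero : φ K q (ι K (0 : Fin 2)) = opA K q := by
  simp [φ]

@[simp] lemma φ_ι_one : φ K q (ι K (1 : Fin 2)) = opB K := by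
  simp [φ]

lemma φ_rel : ∀ ⦃x y⦄, QuantumPlaneRel K q x y → φ K q x = φ K q y := by
  rintro _ _ ⟨⟩
  apply Finsupp.lhom_ext
  intro n c
  rw [map_mul, map_smul, map_mul, φ_ι_zero, φ_ι_one, Module.End.mul_apply,
    LinearMap.smul_apply, Module.End.mul_apply, opB_single, opA_single, opA_single,
    map_smul, opB_single, smul_smul, pow_succ, mul_comm]

/-- The representation of the quantum plane on `ℕ →₀ K`. -/
def ψ : QuantumPlane K q →ₐ[K] Module.End K (ℕ →₀ K) :=
  RingQuot.liftAlgHom K ⟨φ K q, φ_rel K q⟩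

@[simp] lemma ψ_a : ψ K q (QuantumPlane.a K q) = opA K q := by
  rw [QuantumPlane.a, ψ, RingQuot.liftAlgHom_mkAlgHom_apply]
  simp [φ]

@[simp] lemma ψ_b : ψ K q (QuantumPlane.b K q) = opB K := by
  rw [QuantumPlane.b, ψ, RingQuot.liftAlgHom_mkAlgHom_apply]
  simp [φ]

/-- Invariance of the "coordinates below `k` vanish" condition. -/
lemma ψ_invariant (k : ℕ) (c : QuantumPlane K q) (f : ℕ →₀ K)
    (hf : ∀ n < k, f n = 0) : ∀ n < k, ψ K q c f n = 0 := by
  obtain ⟨x, rfl⟩ := RingQuot.mkAlgHom_surjective K (QuantumPlaneRel K q) c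
  rw [ψ, RingQuot.liftAlgHom_mkAlgHom_apply]
  induction x using FreeAlgebra.induction generalizing f with
  | grade0 r =>
      intro n hn
      simp [Algebra.algebraMap_eq_smul_one, hf n hn]
  | grade1 i =>
      rcases eq_or_ne i 0 with rfl | hi
      · intro n hn
        rw [φ_ι_zero, opA_apply, hf n hn, mul_zero]
      · have hi1 : i = 1 := by omega
        subst hi1
        intro n hn
        rw [φ_ι_one]
        cases n with
        | zero => exact opB_apply_zero K f
        | succ m =>
            rw [opB_apply_succ]
            exact hf m (lt_trans (Nat.lt_succ_self m) hn)
  | mul x y hx hy =>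
      intro n hn
      rw [map_mul, Module.End.mul_apply]
      exact hx (φ K q y f) (fun m hm => hy f hf m hm) n hn
  | add x y hx hy =>
      intro n hn
      rw [map_add, LinearMap.add_apply, Finsupp.add_apply, hx f hf n hn, hy f hf n hn,
        add_zero]

end QPaux

/-- In the quantum plane `B = B(q)` with `q` not a root of unity, with
`I = B(ab-1)(a-1)`, the cyclic left `B`-module `M = B/I` is not Artinian. -/
theorem quantumPlane_M_not_artinian (K : Type) [Field K] (q : K) (hq0 : q ≠ 0)
    (hq : ∀ k : ℕ, 0 < k → q ^ k ≠ 1) :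
    ¬ IsArtinian (QuantumPlane K q)
      (QuantumPlane K q ⧸ (Ideal.span {(QuantumPlane.a K q * QuantumPlane.b K q - 1) *
        (QuantumPlane.a K q - 1)} : Ideal (QuantumPlane K q))) := by
  intro hart
  letI : Module (QuantumPlane K q) (ℕ →₀ K) :=
    Module.compHom _ (QPaux.ψ K q).toRingHom
  have hsmul : ∀ (c : QuantumPlane K q) (f : ℕ →₀ K), c • f = QPaux.ψ K q c f :=
    fun _ _ => rfl
  -- the descending chain of submodules
  set S : ℕ → Submodule (QuantumPlane K q) (ℕ →₀ K) := fun k =>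
    { carrier := {f | ∀ n < k, f n = 0}
      add_mem' := fun hf hg n hn => by simp [hf n hn, hg n hn]
      zero_mem' := fun n _ => rfl
      smul_mem' := fun c f hf => by
        rw [hsmul]
        exact QPaux.ψ_invariant K q _ c f hf } with hS
  have hmem : ∀ k f, f ∈ S k ↔ ∀ n < k, f n = 0 := fun k f => Iff.rfl
  -- the surjection from M onto `ℕ →₀ K`
  set e0 : ℕ →₀ K := Finsupp.single 0 1 with he0
  set g : QuantumPlane K q →ₗ[QuantumPlane K q] (ℕ →₀ K) :=
    LinearMap.toSpanSingleton (QuantumPlane K q) (ℕ →₀ K) e0 with hg'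
  have hker : Ideal.span {(QuantumPlane.a K q * QuantumPlane.b K q - 1) *
      (QuantumPlane.a K q - 1)} ≤ LinearMap.ker g := by
    rw [Ideal.span_le, Set.singleton_subset_iff]
    simp only [SetLike.mem_coe, LinearMap.mem_ker, hg', LinearMap.toSpanSingleton_apply]
    rw [hsmul, map_mul, Module.End.mul_apply]
    have h0 : QPaux.ψ K q (QuantumPlane.a K q - 1) e0 = 0 := by
      rw [map_sub, map_one, LinearMap.sub_apply, Module.End.one_apply, QPaux.ψ_a, he0,
        QPaux.opA_single, pow_zero, one_smul, sub_self]
    rw [h0, map_zero]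
  set glift := Submodule.liftQ _ g hker with hglift
  have hgsurj : Function.Surjective g := by
    intro f
    induction f using Finsupp.induction_linear with
    | zero => exact ⟨0, map_zero g⟩
    | add f₁ f₂ h₁ h₂ =>
        obtain ⟨c₁, hc₁⟩ := h₁
        obtain ⟨c₂, hc₂⟩ := h₂
        exact ⟨c₁ + c₂, by rw [map_add, hc₁, hc₂]⟩
    | single n c =>
        refine ⟨algebraMap K _ c * (QuantumPlane.b K q) ^ n, ?_⟩
        have hb : ∀ m : ℕ, QPaux.ψ K q ((QuantumPlane.b K q) ^ m) e0 =
            Finsupp.single m 1 := by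
          intro m
          induction m with
          | zero => rw [pow_zero, map_one, Module.End.one_apply, he0]
          | succ m ih =>
              rw [pow_succ', map_mul, Module.End.mul_apply, ih, QPaux.ψ_b, QPaux.opB_single]
        rw [hg', LinearMap.toSpanSingleton_apply, hsmul, map_mul, Module.End.mul_apply, hb n,
          AlgHom.commutes, Module.algebraMap_end_apply, Finsupp.smul_single, smul_eq_mul,
          mul_one]
  have hsurj : Function.Surjective glift := by
    intro f
    obtain ⟨c, hc⟩ := hgsurj f
    exact ⟨Submodule.Quotient.mk c, by rwa [hglift, Submodule.liftQ_apply]⟩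
  haveI := hart
  haveI : IsArtinian (QuantumPlane K q) (ℕ →₀ K) :=
    isArtinian_of_surjective _ glift hsurj
  have hanti : ∀ k l : ℕ, k ≤ l → S l ≤ S k := by
    intro k l hkl f hf n hn
    exact hf n (lt_of_lt_of_le hn hkl)
  obtain ⟨n, hn⟩ := IsArtinian.monotone_stabilizes (R := QuantumPlane K q) (M := ℕ →₀ K)
    ⟨fun k => OrderDual.toDual (S k), fun k l hkl => hanti k l hkl⟩
  have heq : S n = S (n + 1) := congrArg OrderDual.ofDual (hn (n + 1) (Nat.le_succ n))
  have h1 : (Finsupp.single n (1 : K)) ∈ S n := by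
    intro m hm
    exact Finsupp.single_eq_of_ne' (Nat.ne_of_gt hm)
  rw [heq] at h1
  have := h1 n (Nat.lt_succ_self n)
  rw [Finsupp.single_eq_same] at this
  exact one_ne_zero this

end
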